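/- In a Prüfer domain R, there is no regular sequence of length greater than 1; that is, if x, y are nonzero non-units of R, then x, y is not a regular sequence. -/

import Mathlib

/-- A Prüfer domain: an integral domain whose localizations at maximal ideals are
valuation domains. -/
def IsPruferDomain (R : Type*) [CommRing R] [IsDomain R] : Prop :=
  ∀ M : Ideal R, ∀ _ : M.IsMaximal, ValuationRing (Localization.AtPrime M)

theorem stmt_8 {R : Type*} [CommRing R] [IsDomain R] (hR : IsPruferDomain R)
    (x y : R) (hx0 : x ≠ 0) (hy0 : y ≠ 0) (hx : ¬ IsUnit x) (hy : ¬ IsUnit y) :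
    ¬ RingTheory.Sequence.IsRegular R [x, y] := by
  intro hreg
  -- the ideal (x, y) is proper
  have hproper : Ideal.ofList [x, y] ≠ ⊤ := by
    intro h
    apply hreg.top_ne_smul
    rw [h, smul_eq_mul, Ideal.top_mul]
  -- y is regular mod (x)
  have hyreg : ∀ z : R, y * z ∈ Ideal.span {x} → z ∈ Ideal.span {x} := by
    have h : IsSMulRegular (R ⧸ (Ideal.ofList [x] • ⊤ : Submodule R R)) y :=
      hreg.toIsWeaklyRegular.regular_mod_prev 1 (by simp)
    intro z hz
    have hsm : (Ideal.ofList [x] • ⊤ : Submodule R R) = Ideal.span {x} := by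
      rw [smul_eq_mul, Ideal.mul_top, Ideal.ofList_singleton]
    have h0 : (Submodule.Quotient.mk z :
        R ⧸ (Ideal.ofList [x] • ⊤ : Submodule R R)) = Submodule.Quotient.mk 0 := by
      apply h
      show y • (Submodule.Quotient.mk z : R ⧸ (Ideal.ofList [x] • ⊤ : Submodule R R)) =
        y • Submodule.Quotient.mk 0
      rw [← Submodule.Quotient.mk_smul, ← Submodule.Quotient.mk_smul]
      rw [Submodule.Quotient.eq]
      simpa [hsm, smul_eq_mul] using hz
    rw [Submodule.Quotient.eq] at h0
    simpa [hsm] using h0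
  -- find a maximal ideal containing (x, y)
  obtain ⟨M, hM, hle⟩ := Ideal.exists_le_maximal _ hproper
  have hxM : x ∈ M := hle (Ideal.subset_span (by simp))
  have hyM : y ∈ M := hle (Ideal.subset_span (by simp))
  have := hR M hM
  haveI : M.IsMaximal := hM
  -- valuation ring condition on images of x, y
  obtain ⟨c, hc⟩ := ValuationRing.cond (algebraMap R (Localization.AtPrime M) x)
    (algebraMap R (Localization.AtPrime M) y)
  obtain ⟨⟨a, s⟩, rfl⟩ := IsLocalization.mk'_surjective M.primeCompl c
  dsimp only at hc
  rcases hc with hc | hc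
  · -- x * (a/s) = y  ⇒  t * (x * a) = t * (y * s) for some t ∉ M
    have : algebraMap R (Localization.AtPrime M) (x * a) =
        algebraMap R (Localization.AtPrime M) (y * s) := by
      rw [map_mul, map_mul, ← hc]
      rw [mul_assoc, mul_comm (IsLocalization.mk' _ a s), IsLocalization.mk'_spec']
    obtain ⟨t, ht⟩ := (IsLocalization.eq_iff_exists M.primeCompl _).mp this
    -- y * (t * s) ∈ (x), so t * s ∈ (x) ⊆ M, contradiction
    have hmem : (t : R) * s ∈ Ideal.span {x} := by
      apply hyreg
      refine Ideal.mem_span_singleton.mpr ⟨(t : R) * a, ?_⟩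
      linear_combination -ht
    have : (t : R) * s ∈ M := ((Ideal.span_singleton_le_iff_mem M).mpr hxM) hmem
    exact absurd this (fun h => (mul_mem t.2 s.2 : (t : R) * s ∈ M.primeCompl) h)
  · -- y * (a/s) = x  ⇒  t * (y * a) = t * (x * s) for some t ∉ M
    have : algebraMap R (Localization.AtPrime M) (y * a) =
        algebraMap R (Localization.AtPrime M) (x * s) := by
      rw [map_mul, map_mul, ← hc]
      rw [mul_assoc, mul_comm (IsLocalization.mk' _ a s), IsLocalization.mk'_spec']
    obtain ⟨t, ht⟩ := (IsLocalization.eq_iff_exists M.primeCompl _).mp this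
    -- y * (t * a) = x * (t * s) ∈ (x), so t * a ∈ (x)
    have hmem : (t : R) * a ∈ Ideal.span {x} := by
      apply hyreg
      refine Ideal.mem_span_singleton.mpr ⟨(t : R) * s, ?_⟩
      linear_combination ht
    obtain ⟨d, hd⟩ := Ideal.mem_span_singleton.mp hmem
    -- then x * (t * s) = y * x * d, cancel x: t * s = y * d ∈ (y) ⊆ M
    have hts : (t : R) * s = y * d := by
      have hx' : x * ((t : R) * s) = x * (y * d) := by
        have : (t : R) * (y * a) = (t : R) * (x * s) := ht
        calc x * ((t : R) * s) = (t : R) * (x * s) := by ring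
          _ = (t : R) * (y * a) := this.symm
          _ = y * ((t : R) * a) := by ring
          _ = y * (x * d) := by rw [hd]
          _ = x * (y * d) := by ring
      exact mul_left_cancel₀ hx0 hx'
    have : (t : R) * s ∈ M := hts ▸ Ideal.mul_mem_right _ _ hyM
    exact absurd this (fun h => (mul_mem t.2 s.2 : (t : R) * s ∈ M.primeCompl) h)
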